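/- Let m ≥ 3 be odd and let a, b ∈ GF(3^m) with (a, b) ≠ (0, 0). Consider the quadratic form Q_{a,b}(x) = Tr(a·x^{3^{(m−1)/2}+1} + b·x^{3^{(m−3)/2}+1}) from GF(3^m) to GF(3) and its associated symmetric bilinear form B_{a,b}(x, y) = Q_{a,b}(x + y) − Q_{a,b}(x) − Q_{a,b}(y). Then the radical {x ∈ GF(3^m) : B_{a,b}(x, y) = 0 for all y ∈ GF(3^m)} is a GF(3)-subspace of dimension at most 3; equivalently, the rank r_{a,b} of Q_{a,b} (defined as m minus the GF(3)-dimension of the radical) lies in {m, m−1, m−2, m−3}. -/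

import Mathlib

theorem stmt11 (m : ℕ) (hm : 3 ≤ m) (hmo : Odd m)
    (E : Type*) [Field E] [Fintype E] [Algebra (ZMod 3) E]
    (hE : Fintype.card E = 3 ^ m)
    (a b : E) (hab : (a, b) ≠ ((0 : E), (0 : E)))
    (Q : E → ZMod 3)
    (hQ : ∀ x : E, Q x = Algebra.trace (ZMod 3) E
      (a * x ^ (3 ^ ((m - 1) / 2) + 1) + b * x ^ (3 ^ ((m - 3) / 2) + 1)))
    (B : E → E → ZMod 3) (hB : ∀ x y : E, B x y = Q (x + y) - Q x - Q y) :
    ∃ k : ℕ, k ≤ 3 ∧ Set.ncard {x : E | ∀ y : E, B x y = 0} = 3 ^ k := by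
  classical
  haveI : Fact (Nat.Prime 3) := ⟨by norm_num⟩
  haveI : CharP E 3 := charP_of_injective_algebraMap (algebraMap (ZMod 3) E).injective 3
  -- basic arithmetic set-up
  obtain ⟨t, ht⟩ := hmo
  set d : ℕ := (m - 3) / 2 with hdd
  have h1 : (m - 1) / 2 = d + 1 := by omega
  have hm3 : m = 2 * d + 3 := by omega
  -- x ^ (3 ^ m) = x
  have hxcard : ∀ x : E, x ^ (3 ^ m : ℕ) = x := by
    intro x; rw [← hE]; exact FiniteField.pow_card x
  -- trace is Frobenius invariant
  let σ : E ≃ₐ[ZMod 3] E :=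
    { frobeniusEquiv E 3 with
      commutes' := fun c => by
        show (algebraMap (ZMod 3) E c) ^ 3 = algebraMap (ZMod 3) E c
        rw [← map_pow, ZMod.pow_card] }
  have htr3 : ∀ z : E, Algebra.trace (ZMod 3) E (z ^ (3 : ℕ)) = Algebra.trace (ZMod 3) E z := by
    intro z
    have := Algebra.trace_eq_of_algEquiv σ z
    simpa [σ, frobenius_def] using this
  have htrpow : ∀ (k : ℕ) (z : E),
      Algebra.trace (ZMod 3) E (z ^ (3 ^ k : ℕ)) = Algebra.trace (ZMod 3) E z := by
    intro k
    induction k with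
    | zero => simp
    | succ n ih =>
      intro z
      rw [pow_succ, pow_mul, htr3, ih]
  -- reduction of high Frobenius powers
  have hred : ∀ (z : E) (k : ℕ), z ^ (3 ^ (m + k) : ℕ) = z ^ (3 ^ k : ℕ) := by
    intro z k
    rw [pow_add, pow_mul, hxcard]
  have hmulpow : ∀ (c z : E) (i j : ℕ),
      (c * z ^ (3 ^ i : ℕ)) ^ (3 ^ j : ℕ) = c ^ (3 ^ j : ℕ) * z ^ (3 ^ (i + j) : ℕ) := by
    intro c z i j
    rw [mul_pow, ← pow_mul, ← pow_add]
  -- the linearized map L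
  set L : E → E := fun x => a * x ^ (3 ^ (d + 1) : ℕ) + a ^ (3 ^ (d + 2) : ℕ) * x ^ (3 ^ (d + 2) : ℕ)
      + b * x ^ (3 ^ d : ℕ) + b ^ (3 ^ (d + 3) : ℕ) * x ^ (3 ^ (d + 3) : ℕ) with hL
  -- swap lemma
  have hswap : ∀ (c x y : E) (e : ℕ), e ≤ m →
      Algebra.trace (ZMod 3) E (c * (x * y ^ (3 ^ e : ℕ)))
        = Algebra.trace (ZMod 3) E (c ^ (3 ^ (m - e) : ℕ) * (x ^ (3 ^ (m - e) : ℕ) * y)) := by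
    intro c x y e he
    rw [← htrpow (m - e) (c * (x * y ^ (3 ^ e : ℕ)))]
    congr 1
    have hy : (y ^ (3 ^ e : ℕ)) ^ (3 ^ (m - e) : ℕ) = y := by
      rw [← pow_mul, ← pow_add, Nat.add_sub_cancel' he, hxcard]
    rw [mul_pow, mul_pow, hy]
  -- B x y = trace (L x * y)
  have key : ∀ x y : E, B x y = Algebra.trace (ZMod 3) E (L x * y) := by
    intro x y
    have hexp : ∀ (e : ℕ) (u v : E), (u + v) ^ (3 ^ e + 1 : ℕ)
        = u ^ (3 ^ e + 1 : ℕ) + u ^ (3 ^ e : ℕ) * v + u * v ^ (3 ^ e : ℕ) + v ^ (3 ^ e + 1 : ℕ) := by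
      intro e u v
      calc (u + v) ^ (3 ^ e + 1 : ℕ) = (u + v) ^ (3 ^ e : ℕ) * (u + v) := by rw [pow_succ]
        _ = (u ^ (3 ^ e : ℕ) + v ^ (3 ^ e : ℕ)) * (u + v) := by rw [add_pow_char_pow]
        _ = _ := by rw [pow_succ u, pow_succ v]; ring
    rw [hB, hQ, hQ, hQ, h1, ← map_sub, ← map_sub]
    have hsplit : (a * (x + y) ^ (3 ^ (d + 1) + 1 : ℕ) + b * (x + y) ^ (3 ^ d + 1 : ℕ))
        - (a * x ^ (3 ^ (d + 1) + 1 : ℕ) + b * x ^ (3 ^ d + 1 : ℕ))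
        - (a * y ^ (3 ^ (d + 1) + 1 : ℕ) + b * y ^ (3 ^ d + 1 : ℕ))
        = a * (x ^ (3 ^ (d + 1) : ℕ) * y) + a * (x * y ^ (3 ^ (d + 1) : ℕ))
          + b * (x ^ (3 ^ d : ℕ) * y) + b * (x * y ^ (3 ^ d : ℕ)) := by
      rw [hexp (d + 1) x y, hexp d x y]; ring
    rw [hsplit]
    rw [map_add, map_add, map_add]
    rw [hswap a x y (d + 1) (by omega), hswap b x y d (by omega)]
    have hmd1 : m - (d + 1) = d + 2 := by omega
    have hmd : m - d = d + 3 := by omega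
    rw [hmd1, hmd, ← map_add, ← map_add, ← map_add]
    congr 1
    simp only [hL]
    ring
  -- the radical equals the kernel of L
  haveI : FiniteDimensional (ZMod 3) E := Module.Finite.of_finite
  have hnd := traceForm_nondegenerate (ZMod 3) E
  have hset1 : {x : E | ∀ y : E, B x y = 0} = {x : E | L x = 0} := by
    ext x
    simp only [Set.mem_setOf_eq]
    constructor
    · intro h
      apply hnd.1 (L x)
      intro y
      rw [Algebra.traceForm_apply, ← key x y, h y]
    · intro h y
      rw [key, h, zero_mul, map_zero]
  -- the kernel of L equals the zero set of P
  set P : E → E := fun x => b ^ (3 ^ (d + 3) : ℕ) * x + a ^ (3 ^ (d + 3) : ℕ) * x ^ (3 : ℕ)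
      + a ^ (9 : ℕ) * x ^ (9 : ℕ) + b ^ (27 : ℕ) * x ^ (27 : ℕ) with hP
  have hLP : ∀ x : E, (L x) ^ (3 ^ (d + 3) : ℕ) = P x := by
    intro x
    simp only [hL, hP]
    rw [add_pow_char_pow, add_pow_char_pow, add_pow_char_pow,
      hmulpow a x (d + 1) (d + 3), hmulpow _ x (d + 2) (d + 3), hmulpow b x d (d + 3),
      hmulpow _ x (d + 3) (d + 3)]
    have e1 : d + 1 + (d + 3) = m + 1 := by omega
    have e2 : d + 2 + (d + 3) = m + 2 := by omega
    have e3 : d + (d + 3) = m := by omega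
    have e4 : d + 3 + (d + 3) = m + 3 := by omega
    rw [e1, e2, e3, e4, hred x 1, hred x 2, hred x 3, hxcard x,
      ← pow_mul a, ← pow_add, e2, hred a 2, ← pow_mul b, ← pow_add, e4, hred b 3]
    norm_num
    ring
  have hset2 : {x : E | L x = 0} = {x : E | P x = 0} := by
    ext x
    simp only [Set.mem_setOf_eq]
    rw [← hLP]
    exact (pow_eq_zero_iff (by positivity)).symm
  -- P is additive, so the zero set is a subgroup, hence a ZMod 3 submodule
  have hPadd : ∀ x y : E, P (x + y) = P x + P y := by
    intro x y
    simp only [hP]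
    show b ^ (3 ^ (d + 3) : ℕ) * (x + y) + a ^ (3 ^ (d + 3) : ℕ) * (x + y) ^ (3 ^ 1 : ℕ)
        + a ^ (9 : ℕ) * (x + y) ^ (3 ^ 2 : ℕ) + b ^ (27 : ℕ) * (x + y) ^ (3 ^ 3 : ℕ) = _
    rw [add_pow_char_pow, add_pow_char_pow, add_pow_char_pow]
    show _ = b ^ (3 ^ (d + 3) : ℕ) * x + a ^ (3 ^ (d + 3) : ℕ) * x ^ (3 ^ 1 : ℕ)
        + a ^ (9 : ℕ) * x ^ (3 ^ 2 : ℕ) + b ^ (27 : ℕ) * x ^ (3 ^ 3 : ℕ)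
        + (b ^ (3 ^ (d + 3) : ℕ) * y + a ^ (3 ^ (d + 3) : ℕ) * y ^ (3 ^ 1 : ℕ)
        + a ^ (9 : ℕ) * y ^ (3 ^ 2 : ℕ) + b ^ (27 : ℕ) * y ^ (3 ^ 3 : ℕ))
    ring
  have hPneg : ∀ x : E, P (-x) = - P x := by
    intro x
    simp only [hP]
    rw [Odd.neg_pow (by decide : Odd 3), Odd.neg_pow (by decide : Odd 9),
      Odd.neg_pow (by decide : Odd 27)]
    ring
  set S : AddSubgroup E :=
    { carrier := {x : E | P x = 0}
      add_mem' := fun hx hy => by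
        simp only [Set.mem_setOf_eq] at *
        rw [hPadd, hx, hy, add_zero]
      zero_mem' := by
        simp only [Set.mem_setOf_eq, hP]
        norm_num
      neg_mem' := fun hx => by
        simp only [Set.mem_setOf_eq] at *
        rw [hPneg, hx, neg_zero] } with hS
  set M : Submodule (ZMod 3) E := AddSubgroup.toZModSubmodule 3 S with hM
  have hMS : (M : Set E) = {x : E | P x = 0} := rfl
  have hMcard : Set.ncard {x : E | P x = 0} = 3 ^ Module.finrank (ZMod 3) M := by
    rw [← hMS, Set.ncard_eq_toFinset_card']
    have hcard := Module.card_eq_pow_finrank (K := ZMod 3) (V := M)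
    simp only [ZMod.card] at hcard
    rw [← hcard]
    simp [Set.toFinset_card]
  refine ⟨Module.finrank (ZMod 3) M, ?_, by rw [hset1, hset2, hMcard]⟩
  -- the bound via the degree-27 polynomial
  set p : Polynomial E := Polynomial.C (b ^ (3 ^ (d + 3) : ℕ)) * Polynomial.X
      + Polynomial.C (a ^ (3 ^ (d + 3) : ℕ)) * Polynomial.X ^ 3
      + Polynomial.C (a ^ (9 : ℕ)) * Polynomial.X ^ 9
      + Polynomial.C (b ^ (27 : ℕ)) * Polynomial.X ^ 27 with hp
  have hpeval : ∀ x : E, p.eval x = P x := by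
    intro x
    simp only [hp, hP]
    simp
  have hc3 : p.coeff 3 = a ^ (3 ^ (d + 3) : ℕ) := by
    simp only [hp, Polynomial.coeff_add, Polynomial.coeff_C_mul, Polynomial.coeff_X_pow,
      Polynomial.coeff_X]
    norm_num
  have hc1 : p.coeff 1 = b ^ (3 ^ (d + 3) : ℕ) := by
    simp only [hp, Polynomial.coeff_add, Polynomial.coeff_C_mul, Polynomial.coeff_X_pow,
      Polynomial.coeff_X]
    norm_num
  have hpne : p ≠ 0 := by
    intro h0
    by_cases hbz : b = 0
    · have haz : a ≠ 0 := fun h => hab (by rw [h, hbz])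
      rw [h0, Polynomial.coeff_zero] at hc3
      exact haz ((pow_eq_zero_iff (by positivity : (3 ^ (d + 3) : ℕ) ≠ 0)).mp hc3.symm)
    · rw [h0, Polynomial.coeff_zero] at hc1
      exact hbz ((pow_eq_zero_iff (by positivity : (3 ^ (d + 3) : ℕ) ≠ 0)).mp hc1.symm)
  have hdeg : p.natDegree ≤ 27 := by
    simp only [hp]
    compute_degree
  have hsub : {x : E | P x = 0}.toFinset ⊆ p.roots.toFinset := by
    intro x hx
    simp only [Set.mem_toFinset, Set.mem_setOf_eq] at hx
    rw [Multiset.mem_toFinset, Polynomial.mem_roots hpne]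
    rwa [Polynomial.IsRoot, hpeval]
  have hle : ({x : E | P x = 0}).ncard ≤ 27 := by
    rw [Set.ncard_eq_toFinset_card']
    calc {x : E | P x = 0}.toFinset.card ≤ p.roots.toFinset.card := Finset.card_le_card hsub
      _ ≤ Multiset.card p.roots := Multiset.toFinset_card_le _
      _ ≤ p.natDegree := p.card_roots'
      _ ≤ 27 := hdeg
  have hfin : (3 : ℕ) ^ Module.finrank (ZMod 3) M ≤ 3 ^ 3 := by
    rw [← hMcard]
    simpa using hle
  exact (Nat.pow_le_pow_iff_right (by norm_num)).mp hfin
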